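/- The number of pairs (a₁, a₀) ∈ ℤ² satisfying −X/2 ≤ a₁ < 0, a₀ > 0, 27·a₀² < −4·a₁³, and such that the polynomial T³ + a₁·T + a₀ is irreducible over ℚ, equals (1/(15·√6))·X^{5/2} + o(X^{5/2}) as X → ∞. -/
import Mathlib


open Filter Polynomial
open scoped Topology

noncomputable section

/-- The number of pairs `(a₁, a₀) ∈ ℤ²` with `−X/2 ≤ a₁ < 0`, `a₀ > 0`,
`27 a₀² < −4 a₁³` (positive discriminant), whose associated cubic polynomial
`T³ + a₁ T + a₀` is irreducible over `ℚ`. -/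
def irredCubicCount (X : ℝ) : ℕ :=
  Nat.card {p : ℤ × ℤ //
    -X / 2 ≤ (p.1 : ℝ) ∧ p.1 < 0 ∧ 0 < p.2 ∧
    27 * (p.2 : ℝ) ^ 2 < -4 * (p.1 : ℝ) ^ 3 ∧
    Irreducible (Polynomial.X ^ 3 + C (p.1 : ℚ) * Polynomial.X + C (p.2 : ℚ))}

/-! ### Auxiliary counting functions -/

def gg (m : ℕ) : ℕ := Nat.sqrt ((4*m^3 - 1)/27)

lemma gg_iff {m a : ℕ} (hm : 1 ≤ m) : a ≤ gg m ↔ 27 * a^2 < 4*m^3 := by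
  have hk : 1 ≤ m^3 := Nat.one_le_pow _ _ hm
  unfold gg
  rw [Nat.le_sqrt', Nat.le_div_iff_mul_le (by norm_num)]
  have h2 : a^2 = a*a := sq a
  generalize a*a = A at *
  generalize m^3 = K at *
  omega

def MM (X : ℝ) : ℕ := (⌊X/2⌋).toNat

def condP (X : ℝ) (p : ℤ × ℤ) : Prop :=
  -X / 2 ≤ (p.1 : ℝ) ∧ p.1 < 0 ∧ 0 < p.2 ∧ 27 * (p.2 : ℝ) ^ 2 < -4 * (p.1 : ℝ) ^ 3

def FF (X : ℝ) : Finset (ℤ × ℤ) :=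
  ((Finset.Icc 1 (MM X)).sigma fun m => Finset.Icc 1 (gg m)).image
    fun q => (-(q.1 : ℤ), (q.2 : ℤ))

lemma mem_MM {X : ℝ} {m : ℕ} (hm : 1 ≤ m) : m ≤ MM X ↔ (m : ℝ) ≤ X / 2 := by
  rw [show ((m:ℝ) = ((m:ℤ):ℝ)) by push_cast; ring, ← Int.le_floor]
  unfold MM
  omega

lemma mem_FF {X : ℝ} {p : ℤ × ℤ} : p ∈ FF X ↔ condP X p := by
  constructor
  · intro hp
    obtain ⟨⟨m, a⟩, hmem, rfl⟩ := Finset.mem_image.mp hp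
    rw [Finset.mem_sigma, Finset.mem_Icc, Finset.mem_Icc] at hmem
    obtain ⟨⟨hm1, hm2⟩, ha1, ha2⟩ := hmem
    dsimp only at hm1 hm2 ha1 ha2 ⊢
    have hm2' : (m : ℝ) ≤ X / 2 := (mem_MM hm1).mp hm2
    have hd : 27 * a^2 < 4*m^3 := (gg_iff hm1).mp ha2
    refine ⟨by push_cast; linarith, show -((m:ℤ)) < 0 by omega, show (0:ℤ) < (a:ℤ) by omega, ?_⟩
    push_cast
    have : (27 * a^2 : ℝ) < 4*m^3 := by exact_mod_cast hd
    linarith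
  · rintro ⟨h1, h2, h3, h4⟩
    refine Finset.mem_image.mpr ⟨⟨(-p.1).toNat, p.2.toNat⟩, ?_, ?_⟩
    · have hm1 : 1 ≤ (-p.1).toNat := by omega
      have hmz : ((((-p.1).toNat) : ℤ)) = -p.1 := by omega
      have haz : (((p.2.toNat) : ℤ)) = p.2 := by omega
      rw [Finset.mem_sigma, Finset.mem_Icc, Finset.mem_Icc]
      refine ⟨⟨hm1, (mem_MM hm1).mpr ?_⟩, show 1 ≤ p.2.toNat by omega, ?_⟩
      · have : (((-p.1).toNat : ℤ) : ℝ) ≤ X / 2 := by rw [hmz]; push_cast; linarith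
        exact_mod_cast this
      · show p.2.toNat ≤ gg (-p.1).toNat
        rw [gg_iff hm1]
        have h4' : 27 * p.2^2 < 4 * (-p.1)^3 := by
          have : (27 * (p.2:ℝ)^2) < 4 * (-(p.1:ℝ))^3 := by
            linarith [h4, (by ring : (-4 * (p.1:ℝ)^3) = 4 * (-(p.1:ℝ))^3)]
          exact_mod_cast this
        have : (27 * (p.2.toNat:ℤ)^2) < 4 * (((-p.1).toNat : ℤ))^3 := by
          rw [hmz, haz]; exact h4'
        exact_mod_cast this
    · have hmz : ((((-p.1).toNat) : ℤ)) = -p.1 := by omega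
      have haz : (((p.2.toNat) : ℤ)) = p.2 := by omega
      ext <;> simp [hmz, haz]

lemma card_FF (X : ℝ) : (FF X).card = ∑ m ∈ Finset.Icc 1 (MM X), gg m := by
  unfold FF
  rw [Finset.card_image_of_injective _ (by rintro ⟨m, a⟩ ⟨m', a'⟩ h; simp at h; aesop),
    Finset.card_sigma]
  simp

lemma ncard_cond (X : ℝ) : {p : ℤ × ℤ | condP X p}.ncard = ∑ m ∈ Finset.Icc 1 (MM X), gg m := by
  rw [show {p : ℤ × ℤ | condP X p} = ↑(FF X) from Set.ext fun p => by simp [mem_FF],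
    Set.ncard_coe_finset, card_FF]

/-! ### Reducible polynomials: integer roots -/

def hh (m : ℕ) : ℕ := Nat.sqrt ((4*m)/3)

lemma hh_iff {m : ℕ} {r : ℤ} : r ∈ Finset.Icc (-(hh m):ℤ) (hh m) ↔ 3 * r^2 ≤ 4*m := by
  rw [Finset.mem_Icc, ← abs_le, Int.abs_eq_natAbs, Nat.cast_le]
  unfold hh
  rw [Nat.le_sqrt', Nat.le_div_iff_mul_le (by norm_num)]
  zify
  rw [sq_abs]
  omega

lemma root_bound {m r : ℤ} (hm : 1 ≤ m) (hd : 27*(m*r - r^3)^2 < 4*m^3) : 3*r^2 ≤ 4*m := by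
  by_contra h
  push_neg at h
  have h1 : 4*m + 1 ≤ 3*r^2 := by omega
  have h2 : m + 1 ≤ 3*(r^2 - m) := by omega
  have h3 : (3*r^2) * (3*(r^2-m))^2 ≥ (4*m+1) * (m+1)^2 := by
    have := mul_le_mul h1 (mul_self_le_mul_self (by positivity) h2) (by positivity) (by omega)
    nlinarith [this]
  nlinarith [h3, sq_nonneg r, sq_nonneg (r^2 - m)]

lemma exists_int_root {a₁ a₀ : ℤ}
    (h : ¬ Irreducible (X ^ 3 + C (a₁:ℚ) * X + C (a₀:ℚ))) :
    ∃ r : ℤ, r ^ 3 + a₁ * r + a₀ = 0 := by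
  set pz : ℤ[X] := X ^ 3 + C a₁ * X + C a₀ with hpz
  have hmap : pz.map (algebraMap ℤ ℚ) = X ^ 3 + C (a₁:ℚ) * X + C (a₀:ℚ) := by
    simp [hpz]
  have hmonic : (X ^ 3 + C (a₁:ℚ) * X + C (a₀:ℚ)).Monic := by
    monicity!
  have hdeg : (X ^ 3 + C (a₁:ℚ) * X + C (a₀:ℚ)).natDegree = 3 := by
    compute_degree!
  rw [hmonic.irreducible_iff_roots_eq_zero_of_degree_le_three (by omega) (by omega)] at h
  obtain ⟨ρ, hρ⟩ := Multiset.exists_mem_of_ne_zero h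
  rw [mem_roots hmonic.ne_zero] at hρ
  have haev : aeval ρ pz = 0 := by
    rw [aeval_def, ← eval_map, hmap]
    exact hρ
  have hmz : pz.Monic := by rw [hpz]; monicity!
  obtain ⟨r, hr, -⟩ := exists_integer_of_is_root_of_monic (A := ℤ) (K := ℚ) hmz haev
  refine ⟨r, ?_⟩
  have : (r:ℚ) ^ 3 + (a₁:ℚ) * r + a₀ = 0 := by
    have := hρ
    rw [hr] at this
    simpa [IsRoot, algebraMap_int_eq] using this
  exact_mod_cast this

def IrrP (p : ℤ × ℤ) : Prop :=
  Irreducible (X ^ 3 + C ((p.1:ℚ)) * X + C ((p.2:ℚ)))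

def GG (X : ℝ) : Finset ((_ : ℕ) × ℤ) :=
  (Finset.Icc 1 (MM X)).sigma fun m => Finset.Icc (-(hh m):ℤ) (hh m)

lemma card_GG (X : ℝ) : (GG X).card = ∑ m ∈ Finset.Icc 1 (MM X), (2 * hh m + 1) := by
  unfold GG
  rw [Finset.card_sigma]
  refine Finset.sum_congr rfl fun m _ => ?_
  rw [Int.card_Icc]
  omega

lemma ncard_red_le (X : ℝ) :
    {p : ℤ × ℤ | condP X p ∧ ¬ IrrP p}.ncard ≤ ∑ m ∈ Finset.Icc 1 (MM X), (2 * hh m + 1) := by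
  classical
  rw [← card_GG, ← Nat.card_coe_set_eq, ← Nat.card_eq_finsetCard]
  have hex : ∀ p : {p : ℤ × ℤ // p ∈ {q : ℤ × ℤ | condP X q ∧ ¬ IrrP q}},
      ∃ r : ℤ, r ^ 3 + p.1.1 * r + p.1.2 = 0 := fun p => exists_int_root p.2.2
  have key : ∀ p : {p : ℤ × ℤ // p ∈ {q : ℤ × ℤ | condP X q ∧ ¬ IrrP q}},
      (⟨(-p.1.1).toNat, (hex p).choose⟩ : (_ : ℕ) × ℤ) ∈ GG X := by
    intro p
    obtain ⟨⟨h1, h2, h3, h4⟩, -⟩ := p.2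
    have hroot := (hex p).choose_spec
    set r := (hex p).choose with hrdef
    have hm1 : 1 ≤ (-p.1.1).toNat := by omega
    have hmz : (((-p.1.1).toNat : ℤ)) = -p.1.1 := by omega
    rw [GG, Finset.mem_sigma, Finset.mem_Icc]
    refine ⟨⟨hm1, (mem_MM hm1).mpr ?_⟩, ?_⟩
    · have : (((-p.1.1).toNat : ℤ) : ℝ) ≤ X / 2 := by rw [hmz]; push_cast; linarith
      exact_mod_cast this
    · rw [hh_iff]
      have h4' : 27 * p.1.2 ^ 2 < 4 * (-p.1.1) ^ 3 := by
        have : (27 * (p.1.2:ℝ) ^ 2) < 4 * (-(p.1.1:ℝ)) ^ 3 := by push_cast; linarith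
        exact_mod_cast this
      have ha : p.1.2 = (-p.1.1) * r - r ^ 3 := by linarith
      have := root_bound (m := -p.1.1) (r := r) (by omega) (by rw [← ha]; exact h4')
      rw [hmz]
      exact this
  let f : {p : ℤ × ℤ // p ∈ {q : ℤ × ℤ | condP X q ∧ ¬ IrrP q}} → {q // q ∈ GG X} :=
    fun p => ⟨⟨(-p.1.1).toNat, (hex p).choose⟩, key p⟩
  apply Nat.card_le_card_of_injective f
  intro p p' hpp
  have h1 : (-p.1.1).toNat = (-p'.1.1).toNat := congrArg Sigma.fst (Subtype.ext_iff.mp hpp)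
  have h2 : (hex p).choose = (hex p').choose := by
    have := Subtype.ext_iff.mp hpp
    simp only [f] at this
    exact eq_of_heq (Sigma.mk.inj_iff.mp this).2
  have hc1 : p.1.1 < 0 := p.2.1.2.1
  have hc1' : p'.1.1 < 0 := p'.2.1.2.1
  have e1 : p.1.1 = p'.1.1 := by omega
  have hs := (hex p).choose_spec
  have hs' := (hex p').choose_spec
  rw [← h2, ← e1] at hs'
  have e2 : p.1.2 = p'.1.2 := by linarith
  exact Subtype.ext (Prod.ext e1 e2)

/-! ### The partition identity -/

lemma count_plus (X : ℝ) :
    irredCubicCount X + {p : ℤ × ℤ | condP X p ∧ ¬ IrrP p}.ncard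
      = ∑ m ∈ Finset.Icc 1 (MM X), gg m := by
  have hIr : irredCubicCount X = {p : ℤ × ℤ | condP X p ∧ IrrP p}.ncard := by
    rw [irredCubicCount, ← Nat.card_coe_set_eq]
    exact Nat.card_congr (Equiv.subtypeEquivRight fun p => by
      simp only [Set.mem_setOf_eq, condP, IrrP]; tauto)
  have hfin : {p : ℤ × ℤ | condP X p}.Finite := by
    rw [show {p : ℤ × ℤ | condP X p} = ↑(FF X) from Set.ext fun p => by simp [mem_FF]]
    exact (FF X).finite_toSet
  have hdisj : Disjoint {p : ℤ × ℤ | condP X p ∧ IrrP p} {p : ℤ × ℤ | condP X p ∧ ¬ IrrP p} := by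
    rw [Set.disjoint_left]; rintro p ⟨_, h⟩ ⟨_, h'⟩; exact h' h
  rw [hIr, ← ncard_cond X,
    ← Set.ncard_union_eq hdisj (hfin.subset fun p hp => hp.1) (hfin.subset fun p hp => hp.1)]
  congr 1
  ext p
  simp only [Set.mem_union, Set.mem_setOf_eq]
  tauto

/-! ### Real-analytic estimates -/

lemma rpow_step {a : ℝ} (ha : 0 ≤ a) :
    (5/2) * a^((3:ℝ)/2) ≤ (a+1)^((5:ℝ)/2) - a^((5:ℝ)/2) ∧
      (a+1)^((5:ℝ)/2) - a^((5:ℝ)/2) ≤ (5/2) * (a+1)^((3:ℝ)/2) := by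
  have hcont : ContinuousOn (fun x : ℝ => x ^ ((5:ℝ)/2)) (Set.Icc a (a+1)) :=
    Continuous.continuousOn (continuous_iff_continuousAt.2 fun x =>
      Real.continuousAt_rpow_const x _ (Or.inr (by norm_num)))
  have hderiv : ∀ x ∈ Set.Ioo a (a+1),
      HasDerivAt (fun x : ℝ => x ^ ((5:ℝ)/2)) ((5/2) * x^((3:ℝ)/2)) x := by
    intro x _
    have := Real.hasDerivAt_rpow_const (x := x) (p := 5/2) (Or.inr (by norm_num))
    convert this using 2
    norm_num
  obtain ⟨c, hc, hceq⟩ := exists_hasDerivAt_eq_slope _ _ (by linarith : a < a+1) hcont hderiv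
  have hcv : (a+1)^((5:ℝ)/2) - a^((5:ℝ)/2) = (5/2) * c^((3:ℝ)/2) := by
    rw [hceq]; ring
  have hmono1 : a^((3:ℝ)/2) ≤ c^((3:ℝ)/2) :=
    Real.rpow_le_rpow ha hc.1.le (by norm_num)
  have hmono2 : c^((3:ℝ)/2) ≤ (a+1)^((3:ℝ)/2) :=
    Real.rpow_le_rpow (by linarith [hc.1]) hc.2.le (by norm_num)
  constructor <;> rw [hcv] <;> linarith

def TT (n : ℕ) : ℝ := ∑ m ∈ Finset.Icc 1 n, ((m:ℝ))^((3:ℝ)/2)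

lemma TT_bounds (n : ℕ) :
    (2/5) * (n:ℝ)^((5:ℝ)/2) ≤ TT n ∧ TT n ≤ (2/5) * ((n:ℝ)+1)^((5:ℝ)/2) := by
  induction n with
  | zero =>
    simp [TT, Real.zero_rpow, Real.one_rpow]
    norm_num
  | succ n ih =>
    have h1 := rpow_step (Nat.cast_nonneg n : (0:ℝ) ≤ n)
    have h2 := rpow_step (by positivity : (0:ℝ) ≤ (n:ℝ)+1)
    have hTT : TT (n+1) = TT n + ((n+1:ℕ):ℝ)^((3:ℝ)/2) := by
      unfold TT
      rw [← Finset.sum_Icc_succ_top (by omega : 1 ≤ n+1)]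
    rw [hTT]
    push_cast
    constructor <;> [linarith [ih.1, h1.1, h1.2]; linarith [ih.2, h2.1, h2.2]]

lemma const_eq : Real.sqrt (4/27) * (2/5) * ((1:ℝ)/2)^((5:ℝ)/2) = 1/(15*Real.sqrt 6) := by
  have h1 : (0:ℝ) ≤ Real.sqrt (4/27) * (2/5) * ((1:ℝ)/2)^((5:ℝ)/2) := by positivity
  have h2 : (0:ℝ) ≤ 1/(15*Real.sqrt 6) := by positivity
  have hsq : (Real.sqrt (4/27) * (2/5) * ((1:ℝ)/2)^((5:ℝ)/2))^2 = (1/(15*Real.sqrt 6))^2 := by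
    have e1 : (((1:ℝ)/2)^((5:ℝ)/2))^(2:ℕ) = ((1:ℝ)/2)^(5:ℕ) := by
      rw [← Real.rpow_natCast (((1:ℝ)/2)^((5:ℝ)/2)) 2, ← Real.rpow_mul (by norm_num)]
      norm_num
    have e2 : Real.sqrt (4/27) ^ 2 = 4/27 := Real.sq_sqrt (by norm_num)
    have e3 : Real.sqrt 6 ^ 2 = 6 := Real.sq_sqrt (by norm_num)
    calc (Real.sqrt (4/27) * (2/5) * ((1:ℝ)/2)^((5:ℝ)/2))^2
        = (Real.sqrt (4/27)^2) * ((2/5:ℝ)^2) * ((((1:ℝ)/2)^((5:ℝ)/2))^(2:ℕ)) := by ring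
      _ = 1/1350 := by rw [e1, e2]; norm_num
      _ = 1/((15:ℝ)^2 * 6) := by norm_num
      _ = (1/(15*Real.sqrt 6))^2 := by rw [div_pow, mul_pow, e3]; norm_num
  calc Real.sqrt (4/27) * (2/5) * ((1:ℝ)/2)^((5:ℝ)/2)
      = Real.sqrt ((Real.sqrt (4/27) * (2/5) * ((1:ℝ)/2)^((5:ℝ)/2))^2) := (Real.sqrt_sq h1).symm
    _ = Real.sqrt ((1/(15*Real.sqrt 6))^2) := by rw [hsq]
    _ = 1/(15*Real.sqrt 6) := Real.sqrt_sq h2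

lemma sqrt_cube (m : ℕ) : Real.sqrt ((m:ℝ)^3) = (m:ℝ)^((3:ℝ)/2) := by
  rw [Real.sqrt_eq_rpow, ← Real.rpow_natCast (m:ℝ) 3, ← Real.rpow_mul (Nat.cast_nonneg m)]
  norm_num

lemma gg_upper (m : ℕ) : (gg m : ℝ) ≤ Real.sqrt (4/27) * (m:ℝ)^((3:ℝ)/2) := by
  have h1 : gg m ^ 2 ≤ (4*m^3-1)/27 := Nat.sqrt_le' _
  have h2 : 27 * gg m ^ 2 ≤ 4*m^3 := by
    generalize gg m ^ 2 = A at *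
    generalize m^3 = K at *
    omega
  have h3 : ((gg m : ℝ))^2 ≤ (4/27) * (m:ℝ)^3 := by
    have : ((27 * gg m ^ 2 : ℕ) : ℝ) ≤ ((4*m^3 : ℕ) : ℝ) := Nat.cast_le.mpr h2
    push_cast at this
    nlinarith [this]
  calc (gg m : ℝ) ≤ Real.sqrt ((4/27) * (m:ℝ)^3) :=
        (Real.le_sqrt (by positivity) (by positivity)).mpr h3
    _ = Real.sqrt (4/27) * Real.sqrt ((m:ℝ)^3) := Real.sqrt_mul (by norm_num) _
    _ = Real.sqrt (4/27) * (m:ℝ)^((3:ℝ)/2) := by rw [sqrt_cube]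

lemma gg_lower {m : ℕ} (hm : 1 ≤ m) :
    Real.sqrt (4/27) * (m:ℝ)^((3:ℝ)/2) ≤ (gg m : ℝ) + 1 := by
  have hk : 1 ≤ m^3 := Nat.one_le_pow _ _ hm
  have h1 : (4*m^3-1)/27 < (gg m + 1)^2 := Nat.lt_succ_sqrt' _
  have h2 : 4*m^3 ≤ 27*((gg m + 1)^2) := by
    generalize (gg m + 1)^2 = A at *
    generalize m^3 = K at *
    omega
  have h3 : (4/27) * (m:ℝ)^3 ≤ ((gg m:ℝ)+1)^2 := by
    have : ((4*m^3 : ℕ):ℝ) ≤ ((27*((gg m + 1)^2) : ℕ):ℝ) := Nat.cast_le.mpr h2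
    push_cast at this
    nlinarith [this]
  calc Real.sqrt (4/27) * (m:ℝ)^((3:ℝ)/2)
      = Real.sqrt ((4/27)*(m:ℝ)^3) := by rw [Real.sqrt_mul (by norm_num), sqrt_cube]
    _ ≤ Real.sqrt (((gg m:ℝ)+1)^2) := Real.sqrt_le_sqrt h3
    _ = (gg m:ℝ)+1 := Real.sqrt_sq (by positivity)

lemma hh_upper {m M : ℕ} (hmM : m ≤ M) : (hh m : ℝ) ≤ 2 * Real.sqrt (M:ℝ) := by
  have h1 : hh m ^ 2 ≤ (4*m)/3 := Nat.sqrt_le' _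
  have h2 : hh m ^ 2 ≤ 4*M := by
    generalize hh m ^ 2 = A at *
    omega
  have h3 : ((hh m : ℝ))^2 ≤ 4*(M:ℝ) := by
    have : ((hh m ^ 2 : ℕ):ℝ) ≤ ((4*M : ℕ):ℝ) := Nat.cast_le.mpr h2
    push_cast at this
    linarith
  calc (hh m : ℝ) ≤ Real.sqrt (4*(M:ℝ)) :=
        (Real.le_sqrt (by positivity) (by positivity)).mpr h3
    _ = Real.sqrt 4 * Real.sqrt (M:ℝ) := Real.sqrt_mul (by norm_num) _
    _ = 2 * Real.sqrt (M:ℝ) := by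
        rw [show (4:ℝ) = 2^2 by norm_num, Real.sqrt_sq (by norm_num)]

/-! ### Bounds on the count -/

lemma count_upper (X : ℝ) :
    (irredCubicCount X : ℝ) ≤ Real.sqrt (4/27) * (2/5) * ((MM X : ℝ)+1)^((5:ℝ)/2) := by
  have h1 : irredCubicCount X ≤ ∑ m ∈ Finset.Icc 1 (MM X), gg m := by
    rw [← count_plus X]; exact Nat.le_add_right _ _
  have h2 : ((∑ m ∈ Finset.Icc 1 (MM X), gg m : ℕ) : ℝ)
      ≤ Real.sqrt (4/27) * TT (MM X) := by
    push_cast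
    rw [TT, Finset.mul_sum]
    exact Finset.sum_le_sum fun m _ => gg_upper m
  have h3 := (TT_bounds (MM X)).2
  have h4 : Real.sqrt (4/27) * TT (MM X)
      ≤ Real.sqrt (4/27) * ((2/5) * ((MM X : ℝ)+1)^((5:ℝ)/2)) :=
    mul_le_mul_of_nonneg_left h3 (Real.sqrt_nonneg _)
  calc (irredCubicCount X : ℝ) ≤ ((∑ m ∈ Finset.Icc 1 (MM X), gg m : ℕ) : ℝ) := by
        exact_mod_cast h1
    _ ≤ Real.sqrt (4/27) * TT (MM X) := h2
    _ ≤ Real.sqrt (4/27) * (2/5) * ((MM X : ℝ)+1)^((5:ℝ)/2) := by linarith [h4]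

lemma count_lower (X : ℝ) :
    Real.sqrt (4/27) * (2/5) * ((MM X : ℝ))^((5:ℝ)/2) - (MM X : ℝ)
      - (MM X : ℝ) * (4 * Real.sqrt (MM X : ℝ) + 1) ≤ (irredCubicCount X : ℝ) := by
  have hplus := count_plus X
  have hR := ncard_red_le X
  -- sum of gg lower bound
  have h2 : Real.sqrt (4/27) * TT (MM X) - (MM X : ℝ)
      ≤ ((∑ m ∈ Finset.Icc 1 (MM X), gg m : ℕ) : ℝ) := by
    push_cast
    rw [TT, Finset.mul_sum]
    have : ∑ m ∈ Finset.Icc 1 (MM X), (Real.sqrt (4/27) * (m:ℝ)^((3:ℝ)/2))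
        ≤ ∑ m ∈ Finset.Icc 1 (MM X), ((gg m : ℝ) + 1) :=
      Finset.sum_le_sum fun m hm => gg_lower (Finset.mem_Icc.mp hm).1
    rw [Finset.sum_add_distrib, Finset.sum_const, Nat.card_Icc] at this
    simp only [nsmul_eq_mul, mul_one] at this
    have hc : ((MM X + 1 - 1 : ℕ) : ℝ) = (MM X : ℝ) := by simp
    rw [hc] at this
    linarith
  -- reducible bound
  have h3 : (({p : ℤ × ℤ | condP X p ∧ ¬ IrrP p}.ncard : ℕ) : ℝ)
      ≤ (MM X : ℝ) * (4 * Real.sqrt (MM X : ℝ) + 1) := by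
    have hsum : ((∑ m ∈ Finset.Icc 1 (MM X), (2 * hh m + 1) : ℕ) : ℝ)
        ≤ (MM X : ℝ) * (4 * Real.sqrt (MM X : ℝ) + 1) := by
      push_cast
      have : ∑ m ∈ Finset.Icc 1 (MM X), ((2 * (hh m : ℝ) + 1))
          ≤ ∑ m ∈ Finset.Icc 1 (MM X), (4 * Real.sqrt (MM X : ℝ) + 1) := by
        refine Finset.sum_le_sum fun m hm => ?_
        have := hh_upper (Finset.mem_Icc.mp hm).2
        linarith
      rw [Finset.sum_const, Nat.card_Icc] at this
      simp only [nsmul_eq_mul] at this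
      have hc : ((MM X + 1 - 1 : ℕ) : ℝ) = (MM X : ℝ) := by simp
      rw [hc] at this
      linarith
    calc (({p : ℤ × ℤ | condP X p ∧ ¬ IrrP p}.ncard : ℕ) : ℝ)
        ≤ ((∑ m ∈ Finset.Icc 1 (MM X), (2 * hh m + 1) : ℕ) : ℝ) := by exact_mod_cast hR
      _ ≤ _ := hsum
  have hTT := (TT_bounds (MM X)).1
  have hplusR : (irredCubicCount X : ℝ)
      = ((∑ m ∈ Finset.Icc 1 (MM X), gg m : ℕ) : ℝ)
        - (({p : ℤ × ℤ | condP X p ∧ ¬ IrrP p}.ncard : ℕ) : ℝ) := by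
    have : ((irredCubicCount X + {p : ℤ × ℤ | condP X p ∧ ¬ IrrP p}.ncard : ℕ) : ℝ)
        = ((∑ m ∈ Finset.Icc 1 (MM X), gg m : ℕ) : ℝ) := by exact_mod_cast hplus
    push_cast at this ⊢
    linarith
  have hKnn : (0:ℝ) ≤ Real.sqrt (4/27) := Real.sqrt_nonneg _
  nlinarith [mul_le_mul_of_nonneg_left hTT hKnn]

lemma MM_bounds {X : ℝ} (hX : 0 ≤ X) : (MM X : ℝ) ≤ X/2 ∧ X/2 ≤ (MM X : ℝ) + 1 := by
  have h0 : (0:ℤ) ≤ ⌊X/2⌋ := Int.floor_nonneg.mpr (by linarith)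
  have heq : ((MM X : ℤ)) = ⌊X/2⌋ := by unfold MM; omega
  have heqR : (MM X : ℝ) = ((⌊X/2⌋ : ℤ) : ℝ) := by exact_mod_cast heq
  constructor
  · rw [heqR]; exact Int.floor_le _
  · rw [heqR]; linarith [Int.lt_floor_add_one (X/2)]

/-! ### Limits -/

lemma tendsto_ratio_rpow {f : ℝ → ℝ} (hf0 : ∀ᶠ X in atTop, 0 ≤ f X)
    (h : Tendsto (fun X => f X / X) atTop (𝓝 (1/2))) :
    Tendsto (fun X => f X ^ ((5:ℝ)/2) / X ^ ((5:ℝ)/2)) atTop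
      (𝓝 (((1:ℝ)/2)^((5:ℝ)/2))) := by
  have hc : ContinuousAt (fun t : ℝ => t ^ ((5:ℝ)/2)) (1/2) :=
    Real.continuousAt_rpow_const _ _ (Or.inl (by norm_num))
  have hcomp := hc.tendsto.comp h
  apply Tendsto.congr' _ hcomp
  filter_upwards [hf0, eventually_ge_atTop (0:ℝ)] with X hf hX
  simp only [Function.comp]
  rw [Real.div_rpow hf hX]

lemma half_tendsto : Tendsto (fun X : ℝ => 1/2 - X⁻¹) atTop (𝓝 (1/2)) := by
  simpa using (tendsto_const_nhds : Tendsto (fun _ : ℝ => (1/2:ℝ)) atTop (𝓝 (1/2))).sub tendsto_inv_atTop_zero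

lemma half_tendsto' : Tendsto (fun X : ℝ => 1/2 + X⁻¹) atTop (𝓝 (1/2)) := by
  simpa using (tendsto_const_nhds : Tendsto (fun _ : ℝ => (1/2:ℝ)) atTop (𝓝 (1/2))).add tendsto_inv_atTop_zero

lemma MM_div_tendsto : Tendsto (fun X : ℝ => (MM X : ℝ) / X) atTop (𝓝 (1/2)) := by
  apply tendsto_of_tendsto_of_tendsto_of_le_of_le' half_tendsto half_tendsto'
  · filter_upwards [eventually_ge_atTop (2:ℝ)] with X hX
    have hXpos : (0:ℝ) < X := by linarith
    have h := (MM_bounds (by linarith : (0:ℝ) ≤ X)).2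
    have h2 : (X/2 - 1) / X ≤ (MM X : ℝ) / X := (div_le_div_iff_of_pos_right hXpos).mpr (by linarith)
    have h3 : (X/2 - 1)/X = 1/2 - X⁻¹ := by field_simp <;> ring
    linarith [h2, h3.symm.le, h3.le]
  · filter_upwards [eventually_ge_atTop (2:ℝ)] with X hX
    have hXpos : (0:ℝ) < X := by linarith
    have h := (MM_bounds (by linarith : (0:ℝ) ≤ X)).1
    have h2 : (MM X : ℝ)/X ≤ (X/2)/X := (div_le_div_iff_of_pos_right hXpos).mpr (by linarith)
    have h3 : (X/2)/X = 1/2 := by field_simp <;> ring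
    have hX4 : (0:ℝ) < X⁻¹ := by positivity
    nlinarith [h2, h3]

lemma MM1_div_tendsto : Tendsto (fun X : ℝ => ((MM X : ℝ) + 1) / X) atTop (𝓝 (1/2)) := by
  apply tendsto_of_tendsto_of_tendsto_of_le_of_le' half_tendsto half_tendsto'
  · filter_upwards [eventually_ge_atTop (2:ℝ)] with X hX
    have hXpos : (0:ℝ) < X := by linarith
    have h := (MM_bounds (by linarith : (0:ℝ) ≤ X)).2
    have h2 : (X/2) / X ≤ ((MM X : ℝ) + 1) / X := (div_le_div_iff_of_pos_right hXpos).mpr (by linarith)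
    have h3 : (X/2)/X = 1/2 := by field_simp <;> ring
    have hX4 : (0:ℝ) < X⁻¹ := by positivity
    nlinarith [h2, h3]
  · filter_upwards [eventually_ge_atTop (2:ℝ)] with X hX
    have hXpos : (0:ℝ) < X := by linarith
    have h := (MM_bounds (by linarith : (0:ℝ) ≤ X)).1
    have h2 : ((MM X : ℝ) + 1)/X ≤ (X/2 + 1)/X := (div_le_div_iff_of_pos_right hXpos).mpr (by linarith)
    have h3 : (X/2 + 1)/X = 1/2 + X⁻¹ := by field_simp <;> ring
    linarith [h2, h3.le]

lemma X_div_rpow_tendsto :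
    Tendsto (fun X : ℝ => X / X ^ ((5:ℝ)/2)) atTop (𝓝 0) := by
  have h := tendsto_rpow_neg_atTop (by norm_num : (0:ℝ) < 3/2)
  apply Tendsto.congr' _ h
  filter_upwards [eventually_gt_atTop (0:ℝ)] with X hX
  rw [show (-(3/2) : ℝ) = (1:ℝ) - 5/2 by norm_num, Real.rpow_sub hX, Real.rpow_one]

lemma X32_div_rpow_tendsto :
    Tendsto (fun X : ℝ => X ^ ((3:ℝ)/2) / X ^ ((5:ℝ)/2)) atTop (𝓝 0) := by
  have h := tendsto_rpow_neg_atTop (by norm_num : (0:ℝ) < 1)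
  apply Tendsto.congr' _ h
  filter_upwards [eventually_gt_atTop (0:ℝ)] with X hX
  rw [show (-(1:ℝ)) = (3:ℝ)/2 - 5/2 by norm_num, Real.rpow_sub hX]

lemma hz1 : Tendsto (fun X : ℝ => (MM X : ℝ) / X ^ ((5:ℝ)/2)) atTop (𝓝 0) := by
  apply tendsto_of_tendsto_of_tendsto_of_le_of_le' tendsto_const_nhds X_div_rpow_tendsto
  · filter_upwards [eventually_ge_atTop (0:ℝ)] with X hX
    positivity
  · filter_upwards [eventually_ge_atTop (2:ℝ)] with X hX
    have hXpos : (0:ℝ) < X := by linarith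
    have h := (MM_bounds (by linarith : (0:ℝ) ≤ X)).1
    have hg : (0:ℝ) < X ^ ((5:ℝ)/2) := Real.rpow_pos_of_pos hXpos _
    exact (div_le_div_iff_of_pos_right hg).mpr (by linarith)

lemma hz2 : Tendsto
    (fun X : ℝ => ((MM X : ℝ) * (4 * Real.sqrt (MM X : ℝ) + 1)) / X ^ ((5:ℝ)/2))
    atTop (𝓝 0) := by
  have hup : Tendsto (fun X : ℝ => 4 * (X ^ ((3:ℝ)/2) / X ^ ((5:ℝ)/2)) + X / X ^ ((5:ℝ)/2))
      atTop (𝓝 0) := by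
    simpa using (X32_div_rpow_tendsto.const_mul 4).add X_div_rpow_tendsto
  apply tendsto_of_tendsto_of_tendsto_of_le_of_le' tendsto_const_nhds hup
  · filter_upwards [eventually_ge_atTop (0:ℝ)] with X hX
    positivity
  · filter_upwards [eventually_ge_atTop (2:ℝ)] with X hX
    have hXpos : (0:ℝ) < X := by linarith
    have hM := (MM_bounds (by linarith : (0:ℝ) ≤ X)).1
    have hMX : (MM X : ℝ) ≤ X := by linarith
    have hsq : Real.sqrt (MM X : ℝ) ≤ Real.sqrt X := Real.sqrt_le_sqrt hMX
    have hnum : (MM X : ℝ) * (4 * Real.sqrt (MM X : ℝ) + 1) ≤ X * (4 * Real.sqrt X + 1) := by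
      apply mul_le_mul hMX (by linarith) (by positivity) (by linarith)
    have e3 : X ^ ((3:ℝ)/2) = X * X ^ ((1:ℝ)/2) := by
      rw [show (3:ℝ)/2 = 1 + 1/2 by norm_num, Real.rpow_add hXpos, Real.rpow_one]
    have e2 : X * (4 * Real.sqrt X + 1) = 4 * X ^ ((3:ℝ)/2) + X := by
      rw [Real.sqrt_eq_rpow, e3]; ring
    calc (MM X : ℝ) * (4 * Real.sqrt (MM X : ℝ) + 1) / X ^ ((5:ℝ)/2)
        ≤ (X * (4 * Real.sqrt X + 1)) / X ^ ((5:ℝ)/2) :=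
          (div_le_div_iff_of_pos_right (Real.rpow_pos_of_pos hXpos _)).mpr hnum
      _ = 4 * (X ^ ((3:ℝ)/2) / X ^ ((5:ℝ)/2)) + X / X ^ ((5:ℝ)/2) := by rw [e2]; ring

lemma main_tendsto :
    Tendsto (fun X : ℝ => (irredCubicCount X : ℝ) / X ^ ((5:ℝ)/2)) atTop
      (𝓝 (1/(15*Real.sqrt 6))) := by
  set K := Real.sqrt (4/27) * (2/5) with hK
  have hKnn : (0:ℝ) ≤ K := by positivity
  have hup : Tendsto (fun X : ℝ => K * (((MM X : ℝ)+1) ^ ((5:ℝ)/2) / X ^ ((5:ℝ)/2)))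
      atTop (𝓝 (1/(15*Real.sqrt 6))) := by
    rw [← const_eq]
    have := (tendsto_ratio_rpow (f := fun X => (MM X : ℝ) + 1)
      (Eventually.of_forall fun X => by positivity) MM1_div_tendsto).const_mul K
    simpa [hK, mul_comm] using this
  have hlo1 : Tendsto (fun X : ℝ => K * ((MM X : ℝ) ^ ((5:ℝ)/2) / X ^ ((5:ℝ)/2)))
      atTop (𝓝 (1/(15*Real.sqrt 6))) := by
    rw [← const_eq]
    have := (tendsto_ratio_rpow (f := fun X => (MM X : ℝ))
      (Eventually.of_forall fun X => by positivity) MM_div_tendsto).const_mul K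
    simpa [hK, mul_comm] using this
  have hlo : Tendsto (fun X : ℝ =>
      K * ((MM X : ℝ) ^ ((5:ℝ)/2) / X ^ ((5:ℝ)/2)) - (MM X : ℝ) / X ^ ((5:ℝ)/2)
        - ((MM X : ℝ) * (4 * Real.sqrt (MM X : ℝ) + 1)) / X ^ ((5:ℝ)/2))
      atTop (𝓝 (1/(15*Real.sqrt 6))) := by
    simpa using (hlo1.sub hz1).sub hz2
  apply tendsto_of_tendsto_of_tendsto_of_le_of_le' hlo hup
  · filter_upwards [eventually_ge_atTop (2:ℝ)] with X hX
    have hXpos : (0:ℝ) < X := by linarith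
    have hg : (0:ℝ) < X ^ ((5:ℝ)/2) := Real.rpow_pos_of_pos hXpos _
    have h := count_lower X
    have h2 : (K * (MM X : ℝ) ^ ((5:ℝ)/2) - (MM X : ℝ)
        - (MM X : ℝ) * (4 * Real.sqrt (MM X : ℝ) + 1)) / X ^ ((5:ℝ)/2)
        ≤ (irredCubicCount X : ℝ) / X ^ ((5:ℝ)/2) := (div_le_div_iff_of_pos_right hg).mpr h
    calc K * ((MM X : ℝ) ^ ((5:ℝ)/2) / X ^ ((5:ℝ)/2)) - (MM X : ℝ) / X ^ ((5:ℝ)/2)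
          - ((MM X : ℝ) * (4 * Real.sqrt (MM X : ℝ) + 1)) / X ^ ((5:ℝ)/2)
        = (K * (MM X : ℝ) ^ ((5:ℝ)/2) - (MM X : ℝ)
            - (MM X : ℝ) * (4 * Real.sqrt (MM X : ℝ) + 1)) / X ^ ((5:ℝ)/2) := by ring
      _ ≤ _ := h2
  · filter_upwards [eventually_ge_atTop (2:ℝ)] with X hX
    have hXpos : (0:ℝ) < X := by linarith
    have hg : (0:ℝ) < X ^ ((5:ℝ)/2) := Real.rpow_pos_of_pos hXpos _
    have h := count_upper X
    have h2 : (irredCubicCount X : ℝ) / X ^ ((5:ℝ)/2)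
        ≤ (K * ((MM X : ℝ)+1) ^ ((5:ℝ)/2)) / X ^ ((5:ℝ)/2) := (div_le_div_iff_of_pos_right hg).mpr h
    calc (irredCubicCount X : ℝ) / X ^ ((5:ℝ)/2)
        ≤ (K * ((MM X : ℝ)+1) ^ ((5:ℝ)/2)) / X ^ ((5:ℝ)/2) := h2
      _ = K * (((MM X : ℝ)+1) ^ ((5:ℝ)/2) / X ^ ((5:ℝ)/2)) := by ring

/-- The above count equals `(1/(15√6))·X^{5/2} + o(X^{5/2})` as `X → ∞`. -/
theorem statement8 :
    (fun X : ℝ => (irredCubicCount X : ℝ) - (1 / (15 * Real.sqrt 6)) * X ^ (5 / 2 : ℝ))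
      =o[atTop] fun X : ℝ => X ^ (5 / 2 : ℝ) := by
  rw [Asymptotics.isLittleO_iff_tendsto']
  · have h := main_tendsto.sub_const (1/(15*Real.sqrt 6))
    simp only [sub_self] at h
    apply Tendsto.congr' _ h
    filter_upwards [eventually_gt_atTop (0:ℝ)] with X hX
    have hg : X ^ ((5:ℝ)/2) ≠ 0 := ne_of_gt (Real.rpow_pos_of_pos hX _)
    rw [sub_div, mul_div_assoc, div_self hg, mul_one]
  · filter_upwards [eventually_gt_atTop (0:ℝ)] with X hX h
    exact absurd h (ne_of_gt (Real.rpow_pos_of_pos hX _))
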